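/- Let ν be the Borel probability measure on the boundary ∂F_d of the free group determined by ν(X_γ) = v(γ₁)·Π_{ℓ=2}^m v(γ_ℓ)/(1 − v(γ_{ℓ−1}^{−1})) for reduced words γ = γ₁…γ_m, where v_i = q_i(1−q_{−i})/(1 − q_i q_{−i}) and the q_i satisfy q_j = p_j + q_j Σ_{i≠j} p_i q_{−i}. Then the Radon–Nikodym derivative d(a_i ν)/dν equals q_{−i} on ∂F_d ∖ X_{a_i} and 1/q_i on X_{a_i}, and consequently ν is μ-stationary: μ∗ν = ν. -/

import Mathlib

open MeasureTheory

/-- The boundary `∂F_d` of the free group: infinite reduced words in the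
letters `{±1,…,±d}` (letter `-i` standing for `a_i⁻¹`). -/
def FreeBoundary (d : ℕ) : Type :=
  {w : ℕ → ℤ //
    (∀ n, w n ∈ Finset.Icc (1:ℤ) d ∪ Finset.Icc (-(d:ℤ)) (-1)) ∧
    ∀ n, w (n + 1) ≠ -(w n)}

instance (d : ℕ) : MeasurableSpace (FreeBoundary d) :=
  Subtype.instMeasurableSpace

/-- The cylinder `X_γ` of infinite words beginning with `γ`. -/
def cylinder {d : ℕ} (γ : List ℤ) : Set (FreeBoundary d) :=
  {w | ∀ k : Fin γ.length, w.1 k = γ.get k}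

namespace FBaux

variable {d : ℕ}

lemma mem_cylinder {γ : List ℤ} {w : FreeBoundary d} :
    w ∈ _root_.cylinder γ ↔ ∀ k, (h : k < γ.length) → w.1 k = γ.get ⟨k, h⟩ := by
  constructor
  · intro hw k h; exact hw ⟨k, h⟩
  · intro hw k; exact hw k k.2

lemma measurable_eval (n : ℕ) : Measurable fun w : FreeBoundary d => w.1 n :=
  (measurable_pi_apply n).comp measurable_subtype_coe

lemma measurableSet_cylinder (γ : List ℤ) : MeasurableSet (_root_.cylinder (d := d) γ) := by
  have : _root_.cylinder (d := d) γ = ⋂ k : Fin γ.length,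
      (fun w : FreeBoundary d => w.1 k) ⁻¹' {γ.get k} := by
    ext w; simp [_root_.cylinder, Set.mem_iInter]
  rw [this]
  exact MeasurableSet.iInter fun k => (measurable_eval k) (measurableSet_singleton _)

def Cyls (d : ℕ) : Set (Set (FreeBoundary d)) := {s | ∃ γ : List ℤ, s = _root_.cylinder γ}

lemma cylinder_nil : _root_.cylinder (d := d) ([] : List ℤ) = Set.univ := by
  ext w
  simp only [Set.mem_univ, iff_true, _root_.cylinder, Set.mem_setOf_eq]
  intro k; exact absurd k.2 (by simp)

lemma int_top_eq : (Int.instMeasurableSpace : MeasurableSpace ℤ) =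
    MeasurableSpace.generateFrom {s : Set ℤ | ∃ m : ℤ, s = {m}} := by
  refine le_antisymm ?_ le_top
  intro s _
  have hs : s = ⋃ x : s, {(x : ℤ)} := by
    ext y; simp
  rw [hs]
  exact MeasurableSet.iUnion fun x =>
    MeasurableSpace.measurableSet_generateFrom ⟨x, rfl⟩

lemma generateFrom_cylinders :
    (inferInstance : MeasurableSpace (FreeBoundary d)) =
      MeasurableSpace.generateFrom (Cyls d) := by
  apply le_antisymm
  · show MeasurableSpace.comap Subtype.val MeasurableSpace.pi ≤ _
    rw [MeasurableSpace.pi, MeasurableSpace.comap_iSup]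
    apply iSup_le
    intro n
    rw [MeasurableSpace.comap_comp, int_top_eq, MeasurableSpace.comap_generateFrom]
    apply MeasurableSpace.generateFrom_le
    rintro s ⟨t, ⟨m, rfl⟩, rfl⟩
    have : ((fun b : ℕ → ℤ => b n) ∘ (Subtype.val : FreeBoundary d → ℕ → ℤ)) ⁻¹' {m} =
        ⋃ c : Fin n → ℤ, _root_.cylinder (List.ofFn c ++ [m]) := by
      ext w
      simp only [Set.mem_preimage, Function.comp_apply, Set.mem_singleton_iff, Set.mem_iUnion]
      erw [Set.mem_iUnion]
      constructor
      · intro hw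
        refine ⟨fun k => w.1 k, ?_⟩
        erw [mem_cylinder]
        intro k hk
        rcases Nat.lt_or_ge k n with h | h
        · rw [List.get_eq_getElem, List.getElem_append_left]
          · rw [List.getElem_ofFn]
          · simpa using h
        · have hk' : k = n := by simp at hk; omega
          subst hk'
          rw [List.get_eq_getElem, List.getElem_append_right] <;> simp [hw]
      · rintro ⟨c, hc⟩
        erw [mem_cylinder] at hc
        have hn : n < (List.ofFn c ++ [m]).length := by simp
        have := hc n hn
        rw [List.get_eq_getElem, List.getElem_append_right] at this <;> simp_all
    rw [this]
    exact MeasurableSet.iUnion fun c =>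
      MeasurableSpace.measurableSet_generateFrom ⟨_, rfl⟩
  · apply MeasurableSpace.generateFrom_le
    rintro s ⟨γ, rfl⟩
    exact measurableSet_cylinder γ

lemma isPiSystem_cylinders : IsPiSystem (Cyls d) := by
  rintro s ⟨γ, rfl⟩ t ⟨γ', rfl⟩ hne
  wlog hlen : γ.length ≤ γ'.length generalizing γ γ'
  · rw [Set.inter_comm] at hne ⊢
    exact this γ' γ hne (le_of_not_ge hlen)
  obtain ⟨w, hw1, hw2⟩ := hne
  have hsub : _root_.cylinder (d := d) γ' ⊆ _root_.cylinder γ := by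
    intro u hu
    rw [mem_cylinder] at *
    intro k hk
    have hk' : k < γ'.length := lt_of_lt_of_le hk hlen
    rw [hu k hk', ← hw2 k hk', hw1 k hk]
  rw [Set.inter_eq_self_of_subset_right hsub]
  exact ⟨γ', rfl⟩

end FBaux

namespace FBaux2
open FBaux

variable {d : ℕ}

noncomputable def Lset (d : ℕ) : Finset ℤ := Finset.Icc (1:ℤ) d ∪ Finset.Icc (-(d:ℤ)) (-1)

lemma neg_mem_Lset {j : ℤ} (h : j ∈ Lset d) : -j ∈ Lset d := by
  simp only [Lset, Finset.mem_union, Finset.mem_Icc] at h ⊢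
  omega

lemma cylinder_eq_empty {γ : List ℤ}
    (h : ¬ ((∀ x ∈ γ, x ∈ Lset d) ∧ List.Chain' (fun x y => y ≠ -x) γ)) :
    _root_.cylinder (d := d) γ = ∅ := by
  rw [Set.eq_empty_iff_forall_notMem]
  intro w hw
  rw [FBaux.mem_cylinder] at hw
  apply h
  constructor
  · intro x hx
    obtain ⟨k, hk⟩ := List.mem_iff_get.1 hx
    rw [← hk, ← hw k k.2]
    exact w.2.1 k
  · rw [List.Chain', List.isChain_iff_getElem]
    intro k hk
    have h1 := hw k (by omega)
    have h2 := hw (k+1) (by omega)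
    rw [List.get_eq_getElem] at h1 h2
    rw [← h1, ← h2]
    exact w.2.2 k

section Preimage

variable (i : ℤ) {g : FreeBoundary d → FreeBoundary d}
  (hg : ∀ w : FreeBoundary d, ∀ n : ℕ, (g w).1 n =
    if w.1 0 = -i then w.1 (n + 1) else if n = 0 then i else w.1 (n - 1))

include hg

lemma preimage_cons (y : ℤ) (γ : List ℤ) (hy : y ≠ -i) :
    g ⁻¹' _root_.cylinder (i :: y :: γ) = _root_.cylinder (y :: γ) := by
  ext w
  simp only [Set.mem_preimage, FBaux.mem_cylinder]
  constructor
  · intro h k hk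
    have h0 : w.1 0 ≠ -i := by
      intro h0
      have h1 := h 0 (by simp)
      rw [hg, if_pos h0] at h1
      simp only [List.get] at h1
      have := w.2.2 0
      rw [h1, h0] at this
      simp at this
    have := h (k+1) (by simpa using hk)
    rw [hg, if_neg h0] at this
    simpa using this
  · intro h k hk
    have h0 : w.1 0 ≠ -i := by
      have := h 0 (by simp)
      simp only [List.get] at this
      rw [this]; exact hy
    rw [hg, if_neg h0]
    cases k with
    | zero => simp
    | succ k =>
      simp only [Nat.succ_ne_zero, if_false, Nat.succ_sub_one]
      have := h k (by simpa using hk)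
      simpa using this

lemma preimage_single : g ⁻¹' _root_.cylinder [i] = (_root_.cylinder (d := d) [-i])ᶜ := by
  ext w
  simp only [Set.mem_preimage, Set.mem_compl_iff, FBaux.mem_cylinder]
  constructor
  · intro h hc
    have h0 : w.1 0 = -i := by simpa using hc 0 (by simp)
    have h1 := h 0 (by simp)
    rw [hg, if_pos h0] at h1
    simp only [List.get] at h1
    have := w.2.2 0
    rw [h1, h0] at this
    simp at this
  · intro h k hk
    have hk0 : k = 0 := by simp at hk; omega
    subst hk0
    have h0 : w.1 0 ≠ -i := by
      intro h0
      apply h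
      intro k hk
      have hk0 : k = 0 := by simp at hk; omega
      subst hk0
      simpa using h0
    rw [hg, if_neg h0]
    simp

lemma preimage_other (y : ℤ) (γ : List ℤ) (hy : y ≠ i) :
    g ⁻¹' _root_.cylinder (y :: γ) = _root_.cylinder ((-i) :: y :: γ) := by
  ext w
  simp only [Set.mem_preimage, FBaux.mem_cylinder]
  constructor
  · intro h
    have h0 : w.1 0 = -i := by
      by_contra h0
      have := h 0 (by simp)
      rw [hg, if_neg h0] at this
      simp only [if_pos rfl, List.get] at this
      exact hy this.symm
    intro k hk
    cases k with
    | zero => simpa using h0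
    | succ k =>
      have := h k (by simpa using hk)
      rw [hg, if_pos h0] at this
      simpa using this
  · intro h
    have h0 : w.1 0 = -i := by simpa using h 0 (by simp)
    intro k hk
    rw [hg, if_pos h0]
    have := h (k+1) (by simpa using hk)
    simpa using this

end Preimage

section Arith

noncomputable def vr (q : ℤ → ℝ) (j : ℤ) : ℝ := q j * (1 - q (-j)) / (1 - q j * q (-j))

noncomputable def vrb (q : ℤ → ℝ) (j : ℤ) : ℝ := q (-j) * (1 - q j) / (1 - q j * q (-j))

noncomputable def Wt (q : ℤ → ℝ) (γ : List ℤ) : ℝ :=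
  vr q γ.headI * ∏ ℓ ∈ Finset.Ico 1 γ.length,
    vr q (γ.getD ℓ 0) / (1 - vrb q (γ.getD (ℓ-1) 0))

lemma vrb_sub (q : ℤ → ℝ) {j : ℤ} (h1 : q j ∈ Set.Ioo (0:ℝ) 1) (h2 : q (-j) ∈ Set.Ioo (0:ℝ) 1) :
    1 - vrb q j = (1 - q (-j)) / (1 - q j * q (-j)) := by
  obtain ⟨a1, a2⟩ := h1; obtain ⟨b1, b2⟩ := h2
  have hD : 0 < 1 - q j * q (-j) := by nlinarith
  rw [vrb, eq_div_iff hD.ne', sub_mul, div_mul_cancel₀ _ hD.ne']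
  ring

lemma vr_eq_q_mul (q : ℤ → ℝ) {j : ℤ} (h1 : q j ∈ Set.Ioo (0:ℝ) 1) (h2 : q (-j) ∈ Set.Ioo (0:ℝ) 1) :
    vr q j = q j * (1 - vrb q j) := by
  rw [vrb_sub q h1 h2, vr, mul_div_assoc]

lemma vr_pos (q : ℤ → ℝ) {j : ℤ} (h1 : q j ∈ Set.Ioo (0:ℝ) 1) (h2 : q (-j) ∈ Set.Ioo (0:ℝ) 1) :
    0 < vr q j := by
  obtain ⟨a1, a2⟩ := h1; obtain ⟨b1, b2⟩ := h2
  have hD : 0 < 1 - q j * q (-j) := by nlinarith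
  exact div_pos (by nlinarith) hD

lemma vr_lt_one (q : ℤ → ℝ) {j : ℤ} (h1 : q j ∈ Set.Ioo (0:ℝ) 1) (h2 : q (-j) ∈ Set.Ioo (0:ℝ) 1) :
    vr q j < 1 := by
  obtain ⟨a1, a2⟩ := h1; obtain ⟨b1, b2⟩ := h2
  have hD : 0 < 1 - q j * q (-j) := by nlinarith
  rw [vr, div_lt_one hD]
  nlinarith

lemma one_sub_vrb_pos (q : ℤ → ℝ) {j : ℤ} (h1 : q j ∈ Set.Ioo (0:ℝ) 1)
    (h2 : q (-j) ∈ Set.Ioo (0:ℝ) 1) : 0 < 1 - vrb q j := by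
  obtain ⟨a1, a2⟩ := h1; obtain ⟨b1, b2⟩ := h2
  have hD : 0 < 1 - q j * q (-j) := by nlinarith
  rw [vrb_sub q ⟨a1, a2⟩ ⟨b1, b2⟩]
  exact div_pos (by nlinarith) hD

lemma vrb_eq_vr_neg (q : ℤ → ℝ) (j : ℤ) : vrb q j = vr q (-j) := by
  simp [vr, vrb, neg_neg, mul_comm]

lemma Wt_single (q : ℤ → ℝ) (x : ℤ) : Wt q [x] = vr q x := by
  simp [Wt]

lemma Wt_cons (q : ℤ → ℝ) (x y : ℤ) (γ : List ℤ) :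
    Wt q (x :: y :: γ) = (vr q x / (1 - vrb q x)) * Wt q (y :: γ) := by
  unfold Wt
  simp only [List.length_cons, List.headI]
  rw [Finset.prod_Ico_eq_prod_range, Finset.prod_Ico_eq_prod_range]
  rw [show γ.length + 1 + 1 - 1 = γ.length + 1 from rfl,
      show γ.length + 1 - 1 = γ.length from rfl]
  rw [Finset.prod_range_succ']
  have hterm : vr q ((x :: y :: γ).getD (1 + 0) 0) /
      (1 - vrb q ((x :: y :: γ).getD (1 + 0 - 1) 0)) = vr q y / (1 - vrb q x) := by
    norm_num
  have hprod : ∀ k ∈ Finset.range γ.length,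
      vr q ((x :: y :: γ).getD (1 + (k + 1)) 0) /
        (1 - vrb q ((x :: y :: γ).getD (1 + (k + 1) - 1) 0)) =
      vr q ((y :: γ).getD (1 + k) 0) / (1 - vrb q ((y :: γ).getD (1 + k - 1) 0)) := by
    intro k _
    rw [show 1 + (k + 1) = (k + 1) + 1 from by omega, show (k+1) + 1 - 1 = k + 1 from rfl,
        show 1 + k = k + 1 from by omega, show k + 1 - 1 = k from rfl]
    simp [List.getD_cons_succ]
  rw [Finset.prod_congr rfl hprod, hterm]
  ring

end Arith

end FBaux2

set_option maxHeartbeats 1000000 in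
open FBaux FBaux2 in
/-- If the Borel probability measure `ν` on `∂F_d` has the cylinder values
`ν(X_γ) = v(γ₁)·Π_{ℓ=2}^m v(γ_ℓ)/(1 − v(γ_{ℓ−1}⁻¹))` for reduced `γ`, where
`v_i = q_i(1−q_{−i})/(1−q_i q_{−i})` and the `q_i` solve
`q_j = p_j + q_j Σ_{i≠j} p_i q_{−i}`, then `d(a_i ν)/dν = q_{−i}` off `X_{a_i}`
and `= 1/q_i` on `X_{a_i}`, and `ν` is `μ`-stationary: `μ∗ν = ν`. -/
theorem harmonic_measure_rnDeriv_and_stationary (d : ℕ) (hd : 2 ≤ d)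
    (p q : ℤ → ℝ)
    (hppos : ∀ j ∈ Finset.Icc (1:ℤ) d ∪ Finset.Icc (-(d:ℤ)) (-1), 0 < p j)
    (hpsum : ∑ j ∈ Finset.Icc (1:ℤ) d ∪ Finset.Icc (-(d:ℤ)) (-1), p j = 1)
    (hq : ∀ j ∈ Finset.Icc (1:ℤ) d ∪ Finset.Icc (-(d:ℤ)) (-1),
      q j ∈ Set.Ioo (0:ℝ) 1 ∧
      q j = p j + q j *
        ∑ i ∈ (Finset.Icc (1:ℤ) d ∪ Finset.Icc (-(d:ℤ)) (-1)).erase j,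
          p i * q (-i))
    (act : ℤ → FreeBoundary d → FreeBoundary d)
    (hact : ∀ i ∈ Finset.Icc (1:ℤ) d ∪ Finset.Icc (-(d:ℤ)) (-1),
      ∀ w : FreeBoundary d, ∀ n : ℕ,
        (act i w).1 n =
          if w.1 0 = -i then w.1 (n + 1)
          else if n = 0 then i else w.1 (n - 1))
    (hactm : ∀ i, Measurable (act i))
    (ν : Measure (FreeBoundary d)) [IsProbabilityMeasure ν]
    (hcyl : ∀ γ : List ℤ, γ ≠ [] →
      (∀ x ∈ γ, x ∈ Finset.Icc (1:ℤ) d ∪ Finset.Icc (-(d:ℤ)) (-1)) →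
      List.Chain' (fun x y => y ≠ -x) γ →
      ν (cylinder γ) = ENNReal.ofReal
        ((q γ.headI * (1 - q (-γ.headI)) / (1 - q γ.headI * q (-γ.headI))) *
          ∏ ℓ ∈ Finset.Ico 1 γ.length,
            (q (γ.getD ℓ 0) * (1 - q (-(γ.getD ℓ 0))) /
                (1 - q (γ.getD ℓ 0) * q (-(γ.getD ℓ 0)))) /
              (1 - (q (-(γ.getD (ℓ-1) 0)) * (1 - q (γ.getD (ℓ-1) 0)) /
                (1 - q (γ.getD (ℓ-1) 0) * q (-(γ.getD (ℓ-1) 0))))))) :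
    (∀ i ∈ Finset.Icc (1:ℤ) d ∪ Finset.Icc (-(d:ℤ)) (-1),
      (ν.map (act i)).rnDeriv ν =ᵐ[ν]
        fun w : FreeBoundary d =>
          if w.1 0 = i then (ENNReal.ofReal (q i))⁻¹
          else ENNReal.ofReal (q (-i)))
    ∧ Measure.sum
        (fun j : {j : ℤ // j ∈ Finset.Icc (1:ℤ) d ∪ Finset.Icc (-(d:ℤ)) (-1)} =>
          ENNReal.ofReal (p j) • ν.map (act j)) = ν := by
  classical
  -- Abbreviations
  have hq' : ∀ j ∈ Lset d, q j ∈ Set.Ioo (0:ℝ) 1 := fun j hj => (hq j hj).1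
  have hcyl' : ∀ γ : List ℤ, γ ≠ [] → (∀ x ∈ γ, x ∈ Lset d) →
      List.Chain' (fun x y => y ≠ -x) γ →
      ν (cylinder γ) = ENNReal.ofReal (Wt q γ) := hcyl
  set f : ℤ → FreeBoundary d → ENNReal := fun i w =>
    if w.1 0 = i then (ENNReal.ofReal (q i))⁻¹ else ENNReal.ofReal (q (-i)) with hf
  have hf_meas : ∀ i, Measurable (f i) := by
    intro i
    apply Measurable.ite _ measurable_const measurable_const
    exact (measurable_eval 0) (measurableSet_singleton i)
  -- Basic facts for i ∈ Lset d
  have hIoo : ∀ j ∈ Lset d, q j ∈ Set.Ioo (0:ℝ) 1 ∧ q (-j) ∈ Set.Ioo (0:ℝ) 1 :=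
    fun j hj => ⟨hq' j hj, hq' (-j) (neg_mem_Lset hj)⟩
  have hIoo' : ∀ j ∈ Lset d, q (-(-j)) ∈ Set.Ioo (0:ℝ) 1 := by
    intro j hj; rw [neg_neg]; exact hq' j hj
  have hA1 : ∀ j ∈ Lset d, vr q j = q j * (1 - vrb q j) :=
    fun j hj => vr_eq_q_mul q (hIoo j hj).1 (hIoo j hj).2
  have hApos : ∀ j ∈ Lset d, 0 < vr q j :=
    fun j hj => vr_pos q (hIoo j hj).1 (hIoo j hj).2
  have hAlt : ∀ j ∈ Lset d, vr q j < 1 :=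
    fun j hj => vr_lt_one q (hIoo j hj).1 (hIoo j hj).2
  have hB : ∀ j ∈ Lset d, 0 < 1 - vrb q j :=
    fun j hj => one_sub_vrb_pos q (hIoo j hj).1 (hIoo j hj).2
  have hA3 : ∀ j ∈ Lset d, vrb q j = q (-j) * (1 - vr q j) := by
    intro j hj
    rw [vrb_eq_vr_neg, vr_eq_q_mul q (hIoo j hj).2 (hIoo' j hj), vrb_eq_vr_neg, neg_neg]
  have hBpos : ∀ j ∈ Lset d, 0 < vrb q j := by
    intro j hj
    rw [vrb_eq_vr_neg]
    exact vr_pos q (hIoo j hj).2 (hIoo' j hj)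
  -- cons formula for Wt
  have hWcons : ∀ x ∈ Lset d, ∀ (y : ℤ) (γ' : List ℤ),
      Wt q (x :: y :: γ') = q x * Wt q (y :: γ') := by
    intro x hx y γ'
    rw [Wt_cons, hA1 x hx, mul_div_assoc, div_self (hB x hx).ne', mul_one]
  -- value of ν on length-one cylinders
  have hν1 : ∀ j ∈ Lset d, ν (cylinder [j]) = ENNReal.ofReal (vr q j) := by
    intro j hj
    rw [hcyl' [j] (by simp) (by simpa using hj) (List.isChain_singleton j), Wt_single]
  -- membership in a cons cylinder determines the first letter
  have hfirst : ∀ (x : ℤ) (l : List ℤ) (w : FreeBoundary d),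
      w ∈ cylinder (x :: l) → w.1 0 = x := by
    intro x l w hw
    simpa using (FBaux.mem_cylinder.1 hw) 0 (by simp)
  -- withDensity of a cylinder on which f i is constant
  have hwd : ∀ (i : ℤ) (γ : List ℤ) (c : ENNReal), (∀ w ∈ cylinder (d := d) γ, f i w = c) →
      ν.withDensity (f i) (cylinder γ) = c * ν (cylinder γ) := by
    intro i γ c hc
    rw [withDensity_apply _ (measurableSet_cylinder γ),
      setLIntegral_congr_fun (measurableSet_cylinder γ) hc,
      setLIntegral_const]
  -- key ENNReal identities
  have hE1 : ∀ i ∈ Lset d, (ENNReal.ofReal (q i))⁻¹ * ENNReal.ofReal (vr q i) =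
      ENNReal.ofReal (1 - vrb q i) := by
    intro i hi
    rw [hA1 i hi, ENNReal.ofReal_mul (hq' i hi).1.le, ← mul_assoc,
      ENNReal.inv_mul_cancel (ENNReal.ofReal_pos.2 (hq' i hi).1).ne' ENNReal.ofReal_ne_top,
      one_mul]
  -- total integral of f i equals 1
  have htot : ∀ i ∈ Lset d, ∫⁻ w, f i w ∂ν = 1 := by
    intro i hi
    rw [← lintegral_add_compl (f i) (measurableSet_cylinder (d := d) [i])]
    have e1 : ∫⁻ w in cylinder (d := d) [i], f i w ∂ν =
        (ENNReal.ofReal (q i))⁻¹ * ν (cylinder [i]) := by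
      rw [setLIntegral_congr_fun (measurableSet_cylinder _)
        (fun w hw => ?_), setLIntegral_const]
      simp only [hf, if_pos (hfirst i [] w hw)]
    have e2 : ∫⁻ w in (cylinder (d := d) [i])ᶜ, f i w ∂ν =
        ENNReal.ofReal (q (-i)) * ν (cylinder (d := d) [i])ᶜ := by
      rw [setLIntegral_congr_fun (measurableSet_cylinder _).compl
        (fun w hw => ?_), setLIntegral_const]
      have : w.1 0 ≠ i := by
        intro h0
        apply hw
        apply FBaux.mem_cylinder.2
        intro k hk
        have hk0 : k = 0 := by simp at hk; omega
        subst hk0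
        simpa using h0
      simp only [hf, if_neg this]
    rw [e1, e2, hν1 i hi,
      measure_compl (measurableSet_cylinder _) (measure_ne_top ν _), hν1 i hi,
      measure_univ, hE1 i hi]
    rw [show (1 : ENNReal) - ENNReal.ofReal (vr q i) =
        ENNReal.ofReal (1 - vr q i) by
      rw [ENNReal.ofReal_sub _ (hApos i hi).le, ENNReal.ofReal_one]]
    rw [← ENNReal.ofReal_mul (hq' (-i) (neg_mem_Lset hi)).1.le, ← hA3 i hi,
      ← ENNReal.ofReal_add (hB i hi).le (hBpos i hi).le]
    norm_num
  -- the core identity:  (a_i)_* ν = ν.withDensity (f i)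
  have core : ∀ i ∈ Lset d, ν.map (act i) = ν.withDensity (f i) := by
    intro i hi
    have hgi := hact i hi
    have hmi : -i ∈ Lset d := neg_mem_Lset hi
    haveI : IsProbabilityMeasure (ν.map (act i)) :=
      MeasureTheory.Measure.isProbabilityMeasure_map (hactm i).aemeasurable
    have huniv : (ν.map (act i)) Set.univ = ν.withDensity (f i) Set.univ := by
      rw [measure_univ, withDensity_apply _ MeasurableSet.univ, Measure.restrict_univ,
        htot i hi]
    apply ext_of_generate_finite (Cyls d) generateFrom_cylinders isPiSystem_cylinders _ huniv
    rintro s ⟨γ, rfl⟩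
    have hmap : ν.map (act i) (cylinder γ) = ν ((act i) ⁻¹' (cylinder γ)) :=
      Measure.map_apply (hactm i) (measurableSet_cylinder γ)
    match γ with
    | [] =>
      rw [cylinder_nil]; exact huniv
    | x :: l =>
      by_cases hgood : (∀ z ∈ x :: l, z ∈ Lset d) ∧
          List.Chain' (fun a b => b ≠ -a) (x :: l)
      · obtain ⟨hmem, hch⟩ := hgood
        have hx : x ∈ Lset d := hmem x (by simp)
        by_cases hxi : x = i
        · subst hxi
          -- first letter is i
          match l with
          | [] =>
            rw [hmap, preimage_single x hgi,
              measure_compl (measurableSet_cylinder _) (measure_ne_top ν _), measure_univ,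
              hν1 (-x) hmi, ← vrb_eq_vr_neg,
              hwd x [x] (ENNReal.ofReal (q x))⁻¹
                (fun w hw => by simp only [hf, if_pos (hfirst x [] w hw)]),
              hν1 x hx, hE1 x hx, ENNReal.ofReal_sub _ (hBpos x hx).le,
              ENNReal.ofReal_one]
          | y :: l' =>
            have hy : y ≠ -x := (List.isChain_cons_cons.1 hch).1
            rw [hmap, preimage_cons x hgi y l' hy,
              hcyl' (y :: l') (by simp) (fun z hz => hmem z (List.mem_cons_of_mem _ hz))
                (List.isChain_cons_cons.1 hch).2,
              hwd x (x :: y :: l') (ENNReal.ofReal (q x))⁻¹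
                (fun w hw => by simp only [hf, if_pos (hfirst x (y :: l') w hw)]),
              hcyl' (x :: y :: l') (by simp) hmem hch,
              hWcons x hx y l', ENNReal.ofReal_mul (hq' x hx).1.le, ← mul_assoc,
              ENNReal.inv_mul_cancel (ENNReal.ofReal_pos.2 (hq' x hx).1).ne'
                ENNReal.ofReal_ne_top, one_mul]
        · -- first letter is not i
          have hchain2 : List.Chain' (fun a b => b ≠ -a) (-i :: x :: l) :=
            List.isChain_cons_cons.2 ⟨by simpa [neg_neg] using hxi, hch⟩
          have hmem2 : ∀ z ∈ (-i :: x :: l), z ∈ Lset d := by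
            intro z hz
            rcases List.mem_cons.1 hz with rfl | hz
            · exact hmi
            · exact hmem z hz
          rw [hmap, preimage_other i hgi x l hxi,
            hcyl' (-i :: x :: l) (by simp) hmem2 hchain2,
            hwd i (x :: l) (ENNReal.ofReal (q (-i)))
              (fun w hw => by simp only [hf, if_neg ((hfirst x l w hw) ▸ hxi)]),
            hcyl' (x :: l) (by simp) hmem hch,
            hWcons (-i) hmi x l, ENNReal.ofReal_mul (hq' (-i) hmi).1.le]
      · -- degenerate cylinder
        have hempty : cylinder (d := d) (x :: l) = ∅ := cylinder_eq_empty hgood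
        rw [hmap, hempty]
        simp
  refine ⟨fun i hi => ?_, ?_⟩
  · rw [core i hi]
    exact Measure.rnDeriv_withDensity ν (hf_meas i)
  · apply Measure.ext
    intro s hs
    rw [Measure.sum_apply _ hs]
    have hval : ∀ j : {j : ℤ // j ∈ (Finset.Icc (1:ℤ) d ∪ Finset.Icc (-(d:ℤ)) (-1))},
        (ENNReal.ofReal (p j.1) • ν.map (act j.1)) s
          = ∫⁻ w in s, ENNReal.ofReal (p j.1) * f j.1 w ∂ν := by
      intro j
      rw [Measure.smul_apply, core j.1 j.2, withDensity_apply _ hs, smul_eq_mul,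
        ← lintegral_const_mul _ (hf_meas j.1)]
    rw [tsum_congr hval,
      ← lintegral_tsum (μ := ν.restrict s)
        (f := fun (j : {j : ℤ // j ∈ (Finset.Icc (1:ℤ) d ∪ Finset.Icc (-(d:ℤ)) (-1))})
          (w : FreeBoundary d) => ENNReal.ofReal (p j.1) * f j.1 w)
        (fun j => ((hf_meas j.1).const_mul _).aemeasurable)]
    have hone : ∀ w : FreeBoundary d, ∑' j : {j : ℤ // j ∈ (Finset.Icc (1:ℤ) d ∪ Finset.Icc (-(d:ℤ)) (-1))},
        ENNReal.ofReal (p j.1) * f j.1 w = 1 := by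
      intro w
      have hk : w.1 0 ∈ (Finset.Icc (1:ℤ) d ∪ Finset.Icc (-(d:ℤ)) (-1)) := w.2.1 0
      set k := w.1 0 with hkdef
      rw [show (∑' j : {j : ℤ // j ∈ (Finset.Icc (1:ℤ) d ∪ Finset.Icc (-(d:ℤ)) (-1))},
          ENNReal.ofReal (p j.1) * f j.1 w)
        = ∑ j ∈ (Finset.Icc (1:ℤ) d ∪ Finset.Icc (-(d:ℤ)) (-1)),
            ENNReal.ofReal (p j) * f j w from
        Finset.tsum_subtype _ (fun j => ENNReal.ofReal (p j) * f j w)]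
      rw [← Finset.add_sum_erase ((Finset.Icc (1:ℤ) d ∪ Finset.Icc (-(d:ℤ)) (-1))) _ hk]
      have hterm : ∀ j ∈ ((Finset.Icc (1:ℤ) d ∪ Finset.Icc (-(d:ℤ)) (-1))).erase k,
          ENNReal.ofReal (p j) * f j w = ENNReal.ofReal (p j * q (-j)) := by
        intro j hj
        have hjk : ¬ (w.1 0 = j) := by
          rw [← hkdef]; exact fun h => (Finset.mem_erase.1 hj).1 h.symm
        rw [hf]
        simp only [if_neg hjk]
        rw [← ENNReal.ofReal_mul (hppos j (Finset.mem_erase.1 hj).2).le]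
      rw [Finset.sum_congr rfl hterm]
      have hhead : ENNReal.ofReal (p k) * f k w = ENNReal.ofReal (p k / q k) := by
        simp only [hf, eq_self_iff_true, if_true]
        rw [if_pos hkdef.symm]
        rw [ENNReal.ofReal_div_of_pos (hq' k hk).1, div_eq_mul_inv]
      rw [hhead,
        ← ENNReal.ofReal_sum_of_nonneg (fun j hj => mul_nonneg
          (hppos j (Finset.mem_erase.1 hj).2).le
          (hq' (-j) (neg_mem_Lset (Finset.mem_erase.1 hj).2)).1.le),
        ← ENNReal.ofReal_add
          (div_nonneg (hppos k hk).le (hq' k hk).1.le)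
          (Finset.sum_nonneg (fun j hj => mul_nonneg
            (hppos j (Finset.mem_erase.1 hj).2).le
            (hq' (-j) (neg_mem_Lset (Finset.mem_erase.1 hj).2)).1.le))]
      have hq'' : q k = p k + q k * ∑ j ∈ ((Finset.Icc (1:ℤ) d ∪ Finset.Icc (-(d:ℤ)) (-1))).erase k, p j * q (-j) :=
        (hq k hk).2
      have hk0 : q k ≠ 0 := (hq' k hk).1.ne'
      have hreal : p k / q k + ∑ j ∈ ((Finset.Icc (1:ℤ) d ∪ Finset.Icc (-(d:ℤ)) (-1))).erase k, p j * q (-j) = 1 := by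
        have h3 : p k = q k * (1 - ∑ j ∈ ((Finset.Icc (1:ℤ) d ∪ Finset.Icc (-(d:ℤ)) (-1))).erase k, p j * q (-j)) := by
          linear_combination -hq''
        rw [h3, mul_div_cancel_left₀ _ hk0]
        ring
      rw [hreal, ENNReal.ofReal_one]
    calc ∫⁻ w in s, (∑' j : {j : ℤ // j ∈ (Finset.Icc (1:ℤ) d ∪ Finset.Icc (-(d:ℤ)) (-1))},
            ENNReal.ofReal (p j.1) * f j.1 w) ∂ν
        = ∫⁻ _ in s, 1 ∂ν := by
          apply lintegral_congr
          intro w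
          exact hone w
      _ = ν s := setLIntegral_one s
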